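/- Bound on the expected running maximum of the discrete energy for the MEC scheme with multiplicative noise: under the uniform-mesh stochastic setup and the MEC scheme hypotheses, with Δx ∈ (0,1), one has E( max_{0 ≤ m ≤ M} H_dis[u^m] ) ≤ H_dis[u^0] + (√3/2)·ε·M_dis[u^0]·√(2·ln(2(N+1)))·t_M / ((Δt)^{3/2}·√Δx). -/

import Mathlib

open MeasureTheory ProbabilityTheory Finset

/-- Neumann extension of a vector `u ∈ ℂ^{N+1}`: `u_{-1} := u_0`, `u_{N+1} := u_N`. -/
noncomputable def neumannExt (N : ℕ) (u : ℕ → ℂ) (j : ℤ) : ℂ :=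
  if j ≤ 0 then u 0
  else if (N : ℤ) ≤ j then u N
  else u j.toNat

/-- Discrete mass on a uniform mesh: `M_dis[u] = Δx·Σ_{j=0}^{N} |u_j|²`. -/
noncomputable def MdisU (N : ℕ) (Δx : ℝ) (u : ℕ → ℂ) : ℝ :=
  Δx * ∑ j ∈ Finset.range (N + 1), ‖u j‖ ^ 2

/-- Discrete energy on a uniform mesh:
`H_dis[u] = (Δx/2)·Σ_{j=0}^{N} |u_{j+1}-u_j|²/(Δx)² - (Δx/(2(σ+1)))·Σ_{j=0}^{N} |u_j|^{2(σ+1)}`,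
the value `u_{N+1}` being given by the Neumann convention. -/
noncomputable def HdisU (N : ℕ) (Δx : ℝ) (σ : ℕ) (u : ℕ → ℂ) : ℝ :=
  (Δx / 2) * ∑ j ∈ Finset.range (N + 1), ‖neumannExt N u ((j : ℤ) + 1) - u j‖ ^ 2 / Δx ^ 2
    - (Δx / (2 * ((σ : ℝ) + 1))) * ∑ j ∈ Finset.range (N + 1), ‖u j‖ ^ (2 * (σ + 1))

namespace MECaux

lemma nE_cast (N : ℕ) (u : ℕ → ℂ) {j : ℕ} (h : j ≤ N) : neumannExt N u (j : ℤ) = u j := by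
  unfold neumannExt
  split_ifs with h1 h2
  · have : j = 0 := by omega
    simp [this]
  · have : j = N := by omega
    simp [this]
  · simp

lemma nE_neg (N : ℕ) (u : ℕ → ℂ) {z : ℤ} (h : z ≤ 0) : neumannExt N u z = u 0 := by
  unfold neumannExt; rw [if_pos h]

lemma nE_succ_lt (N : ℕ) (u : ℕ → ℂ) {j : ℕ} (h : j < N) :
    neumannExt N u ((j : ℤ) + 1) = u (j + 1) := by
  rw [show ((j : ℤ) + 1) = ((j + 1 : ℕ) : ℤ) by push_cast; ring, nE_cast N u (by omega)]

lemma nE_succ_N (N : ℕ) (u : ℕ → ℂ) : neumannExt N u ((N : ℤ) + 1) = u N := by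
  unfold neumannExt
  split_ifs with h1 h2
  · omega
  · rfl
  · omega

/-- forward difference with Neumann boundary -/
noncomputable def D (N : ℕ) (u : ℕ → ℂ) (j : ℕ) : ℂ := neumannExt N u ((j : ℤ) + 1) - u j

lemma D_lt (N : ℕ) (u : ℕ → ℂ) {j : ℕ} (h : j < N) : D N u j = u (j + 1) - u j := by
  rw [D, nE_succ_lt N u h]

lemma D_last (N : ℕ) (u : ℕ → ℂ) : D N u N = 0 := by
  rw [D, nE_succ_N, sub_self]

lemma nE_add (N : ℕ) (p q : ℕ → ℂ) (z : ℤ) :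
    neumannExt N (fun k => p k + q k) z = neumannExt N p z + neumannExt N q z := by
  unfold neumannExt; split_ifs <;> rfl

lemma nE_half (N : ℕ) (p : ℕ → ℂ) (z : ℤ) :
    neumannExt N (fun k => p k / 2) z = neumannExt N p z / 2 := by
  unfold neumannExt; split_ifs <;> rfl

lemma D_add (N : ℕ) (p q : ℕ → ℂ) (j : ℕ) :
    D N (fun k => p k + q k) j = D N p j + D N q j := by
  simp only [D, nE_add]; ring

/-- summation by parts with Neumann boundary -/
lemma sbp (N : ℕ) (a b : ℕ → ℂ) :
    ∑ j ∈ range (N + 1),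
        (neumannExt N a ((j : ℤ) - 1) - 2 * a j + neumannExt N a ((j : ℤ) + 1))
          * (starRingEnd ℂ) (b j)
      = - ∑ j ∈ range (N + 1), D N a j * (starRingEnd ℂ) (D N b j) := by
  have hsplit : ∀ j ∈ range (N + 1),
      (neumannExt N a ((j : ℤ) - 1) - 2 * a j + neumannExt N a ((j : ℤ) + 1))
          * (starRingEnd ℂ) (b j)
        = D N a j * (starRingEnd ℂ) (b j)
          - (a j - neumannExt N a ((j : ℤ) - 1)) * (starRingEnd ℂ) (b j) := by
    intro j hj; simp only [D]; ring
  rw [Finset.sum_congr rfl hsplit, Finset.sum_sub_distrib]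
  have h2 : ∑ j ∈ range (N + 1), (a j - neumannExt N a ((j : ℤ) - 1)) * (starRingEnd ℂ) (b j)
      = ∑ i ∈ range N, D N a i * (starRingEnd ℂ) (b (i + 1)) := by
    rw [Finset.sum_range_succ']
    have h0 : (a 0 - neumannExt N a (((0 : ℕ) : ℤ) - 1)) * (starRingEnd ℂ) (b 0) = 0 := by
      rw [nE_neg N a (by norm_num)]
      simp
    rw [h0, add_zero]
    refine Finset.sum_congr rfl fun i hi => ?_
    rw [Finset.mem_range] at hi
    rw [show (((i + 1 : ℕ) : ℤ) - 1) = (i : ℤ) by push_cast; ring, nE_cast N a (le_of_lt hi),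
      D_lt N a hi]
  rw [h2, Finset.sum_range_succ (fun j => D N a j * (starRingEnd ℂ) (b j)),
    Finset.sum_range_succ (fun j => D N a j * (starRingEnd ℂ) (D N b j)),
    D_last, zero_mul, add_zero, zero_mul, add_zero, ← Finset.sum_sub_distrib, ← Finset.sum_neg_distrib]
  refine Finset.sum_congr rfl fun j hj => ?_
  rw [Finset.mem_range] at hj
  rw [D_lt N b hj, map_sub]
  ring



lemma nsq (z : ℂ) : ‖z‖ ^ 2 = z.re ^ 2 + z.im ^ 2 := by
  rw [Complex.sq_norm, Complex.normSq_apply]; ring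

lemma k1 (z z' : ℂ) : (Complex.I * (z' - z) * (starRingEnd ℂ) (z + z')).im
    = ‖z'‖ ^ 2 - ‖z‖ ^ 2 := by
  simp only [nsq, Complex.mul_im, Complex.mul_re, Complex.add_re, Complex.add_im,
    Complex.sub_re, Complex.sub_im, Complex.I_re, Complex.I_im, Complex.conj_re,
    Complex.conj_im]
  ring

lemma k2 (z z' : ℂ) : (Complex.I * (z' - z) * (starRingEnd ℂ) (z' - z)).re = 0 := by
  simp only [Complex.mul_re, Complex.mul_im, Complex.sub_re, Complex.sub_im, Complex.I_re,
    Complex.I_im, Complex.conj_re, Complex.conj_im]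
  ring

lemma k3 (z z' : ℂ) : ((z + z') * (starRingEnd ℂ) (z' - z)).re = ‖z'‖ ^ 2 - ‖z‖ ^ 2 := by
  simp only [nsq, Complex.mul_re, Complex.add_re, Complex.add_im, Complex.sub_re,
    Complex.sub_im, Complex.conj_re, Complex.conj_im]
  ring

lemma k0 (z : ℂ) : (z * (starRingEnd ℂ) z).im = 0 := by
  simp only [Complex.mul_im, Complex.conj_re, Complex.conj_im]
  ring

lemma k0re (z : ℂ) : (z * (starRingEnd ℂ) z).re = ‖z‖ ^ 2 := by
  simp only [nsq, Complex.mul_re, Complex.conj_re, Complex.conj_im]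
  ring

lemma mul_ofReal_im (z : ℂ) (r : ℝ) : (z * (r : ℂ)).im = z.im * r := by
  simp [Complex.mul_im]

lemma mul_ofReal_re (z : ℂ) (r : ℝ) : (z * (r : ℂ)).re = z.re * r := by
  simp [Complex.mul_re]

lemma ofReal_mul_im (r : ℝ) (z : ℂ) : ((r : ℂ) * z).im = r * z.im := by
  simp [Complex.mul_im]

lemma ofReal_mul_re (r : ℝ) (z : ℂ) : ((r : ℂ) * z).re = r * z.re := by
  simp [Complex.mul_re]

lemma energy_arith (Δx ε cσ SD SD' SP SP' S3 : ℝ) (hΔx : Δx ≠ 0)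
    (hid : Δx ^ 2 * (cσ * (SP' - SP)) - (SD' - SD) = Δx ^ 2 * (ε * S3)) :
    (Δx / 2) * (SD' / Δx ^ 2) - Δx * cσ / 2 * SP'
      = (Δx / 2) * (SD / Δx ^ 2) - Δx * cσ / 2 * SP - ε * Δx / 2 * S3 := by
  have hSD' : SD' = SD + Δx ^ 2 * (cσ * (SP' - SP)) - Δx ^ 2 * (ε * S3) := by
    linear_combination -hid
  rw [hSD']
  field_simp
  ring

lemma step_identities (N σ : ℕ) (Δx Δt ε : ℝ) (hΔx : 0 < Δx) (hΔt : 0 < Δt)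
    (w w' : ℕ → ℂ) (V f : ℕ → ℝ)
    (hV : ∀ j ≤ N, V j * (‖w' j‖ ^ 2 - ‖w j‖ ^ 2)
      = (1 / ((σ : ℝ) + 1)) * (‖w' j‖ ^ (2 * (σ + 1)) - ‖w j‖ ^ (2 * (σ + 1))))
    (heq : ∀ j ≤ N,
      Complex.I * (w' j - w j) / (Δt : ℂ)
        + (neumannExt N (fun k => (w k + w' k) / 2) ((j : ℤ) - 1)
            - 2 * neumannExt N (fun k => (w k + w' k) / 2) (j : ℤ)
            + neumannExt N (fun k => (w k + w' k) / 2) ((j : ℤ) + 1)) / (Δx : ℂ) ^ 2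
        + (V j : ℂ) * ((w j + w' j) / 2)
      = (ε : ℂ) * ((f j : ℝ) : ℂ) * ((w j + w' j) / 2)) :
    (∑ j ∈ range (N + 1), ‖w' j‖ ^ 2 = ∑ j ∈ range (N + 1), ‖w j‖ ^ 2) ∧
    HdisU N Δx σ w'
      = HdisU N Δx σ w - (ε * Δx / 2) * ∑ j ∈ range (N + 1), f j * (‖w' j‖ ^ 2 - ‖w j‖ ^ 2) := by
  have hΔtC : (Δt : ℂ) ≠ 0 := by exact_mod_cast hΔt.ne'
  have hΔxC : (Δx : ℂ) ≠ 0 := by exact_mod_cast hΔx.ne'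
  -- cleared form of the scheme
  have hclear : ∀ j ∈ range (N + 1),
      Complex.I * (w' j - w j) * 2 * (Δx : ℂ) ^ 2
        + (neumannExt N (fun k => w k + w' k) ((j : ℤ) - 1) - 2 * (w j + w' j)
            + neumannExt N (fun k => w k + w' k) ((j : ℤ) + 1)) * (Δt : ℂ)
        + (V j : ℂ) * (w j + w' j) * (Δt : ℂ) * (Δx : ℂ) ^ 2
      = (ε : ℂ) * ((f j : ℝ) : ℂ) * (w j + w' j) * (Δt : ℂ) * (Δx : ℂ) ^ 2 := by
    intro j hj
    rw [Finset.mem_range] at hj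
    have hjN : j ≤ N := by omega
    have h := heq j hjN
    have e : ∀ z : ℤ, neumannExt N (fun k => (w k + w' k) / 2) z
        = neumannExt N (fun k => w k + w' k) z / 2 := fun z => nE_half N _ z
    rw [e, e, e, nE_cast N (fun k => w k + w' k) hjN] at h
    field_simp at h
    linear_combination h
  -- phase 1: mass conservation
  have hmassC : (∑ j ∈ range (N + 1),
        Complex.I * (w' j - w j) * (starRingEnd ℂ) (w j + w' j)) * (((2 * Δx ^ 2 : ℝ)) : ℂ)
      + (∑ j ∈ range (N + 1),
          (neumannExt N (fun k => w k + w' k) ((j : ℤ) - 1) - 2 * (w j + w' j)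
            + neumannExt N (fun k => w k + w' k) ((j : ℤ) + 1))
            * (starRingEnd ℂ) ((fun k => w k + w' k) j)) * ((Δt : ℝ) : ℂ)
      + ∑ j ∈ range (N + 1), ((V j * Δt * Δx ^ 2 : ℝ) : ℂ)
          * ((w j + w' j) * (starRingEnd ℂ) (w j + w' j))
      = ∑ j ∈ range (N + 1), ((ε * f j * Δt * Δx ^ 2 : ℝ) : ℂ)
          * ((w j + w' j) * (starRingEnd ℂ) (w j + w' j)) := by
    rw [Finset.sum_mul, Finset.sum_mul, ← Finset.sum_add_distrib, ← Finset.sum_add_distrib]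
    refine Finset.sum_congr rfl fun j hj => ?_
    have h := hclear j hj
    push_cast
    linear_combination (starRingEnd ℂ) (w j + w' j) * h
  rw [sbp N (fun k => w k + w' k) (fun k => w k + w' k)] at hmassC
  have hmass0 : ∑ j ∈ range (N + 1), (‖w' j‖ ^ 2 - ‖w j‖ ^ 2) = 0 := by
    have him := congrArg Complex.im hmassC
    simp only [Complex.add_im, Complex.neg_im, mul_ofReal_im, ofReal_mul_im, Complex.im_sum,
      k0, k1, Finset.sum_const_zero, mul_zero, zero_mul, add_zero, neg_zero, zero_add] at him
    have h2 : (0 : ℝ) < 2 * Δx ^ 2 := by positivity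
    exact (mul_eq_zero.mp him).resolve_right h2.ne'
  have hmass : ∑ j ∈ range (N + 1), ‖w' j‖ ^ 2 = ∑ j ∈ range (N + 1), ‖w j‖ ^ 2 := by
    rw [Finset.sum_sub_distrib] at hmass0
    linarith
  refine ⟨hmass, ?_⟩
  -- phase 2: energy identity
  have henC : (∑ j ∈ range (N + 1),
        Complex.I * (w' j - w j) * (starRingEnd ℂ) (w' j - w j)) * (((2 * Δx ^ 2 : ℝ)) : ℂ)
      + (∑ j ∈ range (N + 1),
          (neumannExt N (fun k => w k + w' k) ((j : ℤ) - 1) - 2 * (w j + w' j)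
            + neumannExt N (fun k => w k + w' k) ((j : ℤ) + 1))
            * (starRingEnd ℂ) ((fun k => w' k - w k) j)) * ((Δt : ℝ) : ℂ)
      + ∑ j ∈ range (N + 1), ((V j * Δt * Δx ^ 2 : ℝ) : ℂ)
          * ((w j + w' j) * (starRingEnd ℂ) (w' j - w j))
      = ∑ j ∈ range (N + 1), ((ε * f j * Δt * Δx ^ 2 : ℝ) : ℂ)
          * ((w j + w' j) * (starRingEnd ℂ) (w' j - w j)) := by
    rw [Finset.sum_mul, Finset.sum_mul, ← Finset.sum_add_distrib, ← Finset.sum_add_distrib]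
    refine Finset.sum_congr rfl fun j hj => ?_
    have h := hclear j hj
    push_cast
    linear_combination (starRingEnd ℂ) (w' j - w j) * h
  rw [sbp N (fun k => w k + w' k) (fun k => w' k - w k)] at henC
  have hD1 : ∀ j : ℕ, D N (fun k => w k + w' k) j = D N w j + D N w' j := fun j => by
    simp only [D, nE_add]; ring
  have hD2 : ∀ j : ℕ, D N (fun k => w' k - w k) j = D N w' j - D N w j := fun j => by
    have : (fun k => w' k - w k) = (fun k => w' k + (-1 : ℂ) * w k) := by funext k; ring
    rw [this]
    have h2 : neumannExt N (fun k => w' k + (-1 : ℂ) * w k) ((j : ℤ) + 1)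
        = neumannExt N w' ((j : ℤ) + 1) + (-1 : ℂ) * neumannExt N w ((j : ℤ) + 1) := by
      rw [show (fun k => w' k + (-1 : ℂ) * w k)
        = (fun k => w' k + (fun i => (-1 : ℂ) * w i) k) from rfl, nE_add]
      congr 1
      unfold neumannExt; split_ifs <;> rfl
    simp only [D, h2]; ring
  have hre := congrArg Complex.re henC
  simp only [Complex.add_re, Complex.neg_re, mul_ofReal_re, ofReal_mul_re, Complex.re_sum,
    hD1, hD2, k2, k3, Finset.sum_const_zero, mul_zero, zero_mul, add_zero, neg_zero,
    zero_add] at hre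
  -- use the MEC condition on V
  have hVsum : ∑ j ∈ range (N + 1), V j * Δt * Δx ^ 2 * (‖w' j‖ ^ 2 - ‖w j‖ ^ 2)
      = Δt * Δx ^ 2 * ((1 / ((σ : ℝ) + 1))
          * ∑ j ∈ range (N + 1), (‖w' j‖ ^ (2 * (σ + 1)) - ‖w j‖ ^ (2 * (σ + 1)))) := by
    rw [Finset.mul_sum, Finset.mul_sum]
    refine Finset.sum_congr rfl fun j hj => ?_
    rw [Finset.mem_range] at hj
    have := hV j (by omega)
    linear_combination Δt * Δx ^ 2 * this
  rw [hVsum] at hre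
  have hfsum : ∑ j ∈ range (N + 1), ε * f j * Δt * Δx ^ 2 * (‖w' j‖ ^ 2 - ‖w j‖ ^ 2)
      = Δt * Δx ^ 2 * (ε * ∑ j ∈ range (N + 1), f j * (‖w' j‖ ^ 2 - ‖w j‖ ^ 2)) := by
    rw [Finset.mul_sum, Finset.mul_sum]
    exact Finset.sum_congr rfl fun j hj => by ring
  rw [hfsum] at hre
  have hre' : Δt * (Δx ^ 2 * ((1 / ((σ : ℝ) + 1))
        * ∑ j ∈ range (N + 1), (‖w' j‖ ^ (2 * (σ + 1)) - ‖w j‖ ^ (2 * (σ + 1))))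
        - ∑ x ∈ range (N + 1), (‖D N w' x‖ ^ 2 - ‖D N w x‖ ^ 2))
      = Δt * (Δx ^ 2 * (ε * ∑ j ∈ range (N + 1), f j * (‖w' j‖ ^ 2 - ‖w j‖ ^ 2))) := by
    linear_combination hre
  have hid := mul_left_cancel₀ hΔt.ne' hre'
  rw [Finset.sum_sub_distrib, Finset.sum_sub_distrib] at hid
  have hσ0 : ((σ : ℝ) + 1) ≠ 0 := by positivity
  have hD' : ∀ u : ℕ → ℂ, ∑ j ∈ range (N + 1), ‖neumannExt N u ((j : ℤ) + 1) - u j‖ ^ 2 / Δx ^ 2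
      = (∑ j ∈ range (N + 1), ‖D N u j‖ ^ 2) / Δx ^ 2 := by
    intro u
    rw [Finset.sum_div]
    rfl
  have hcoef : Δx / (2 * ((σ : ℝ) + 1)) = Δx * (1 / ((σ : ℝ) + 1)) / 2 := by
    rw [mul_one_div, div_div, mul_comm]
  rw [HdisU, HdisU, hD', hD', hcoef]
  exact energy_arith Δx ε (1 / ((σ : ℝ) + 1)) _ _ _ _ _ hΔx.ne' (by linear_combination hid)

lemma pathwise (N M σ : ℕ) (Δx Δt ε : ℝ) (hΔx : 0 < Δx) (hΔt : 0 < Δt) (hε : 0 ≤ ε)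
    (w : ℕ → ℕ → ℂ) (V f : ℕ → ℕ → ℝ)
    (hstep : ∀ m < M,
      (∀ j ≤ N, V m j * (‖w (m + 1) j‖ ^ 2 - ‖w m j‖ ^ 2)
        = (1 / ((σ : ℝ) + 1))
            * (‖w (m + 1) j‖ ^ (2 * (σ + 1)) - ‖w m j‖ ^ (2 * (σ + 1)))) ∧
      (∀ j ≤ N,
        Complex.I * (w (m + 1) j - w m j) / (Δt : ℂ)
          + (neumannExt N (fun k => (w m k + w (m + 1) k) / 2) ((j : ℤ) - 1)
              - 2 * neumannExt N (fun k => (w m k + w (m + 1) k) / 2) (j : ℤ)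
              + neumannExt N (fun k => (w m k + w (m + 1) k) / 2) ((j : ℤ) + 1)) / (Δx : ℂ) ^ 2
          + (V m j : ℂ) * ((w m j + w (m + 1) j) / 2)
        = (ε : ℂ) * ((f m j : ℝ) : ℂ) * ((w m j + w (m + 1) j) / 2))) :
    ∀ m ≤ M, HdisU N Δx σ (w m)
      ≤ HdisU N Δx σ (w 0)
        + ∑ k ∈ range m, ε * Δx * (∑ j ∈ range (N + 1), ‖w 0 j‖ ^ 2)
            * ((range (N + 1)).sup' nonempty_range_add_one (fun j => |f k j|)) := by
  -- mass conservation for all m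
  have hmass : ∀ m ≤ M, ∑ j ∈ range (N + 1), ‖w m j‖ ^ 2
      = ∑ j ∈ range (N + 1), ‖w 0 j‖ ^ 2 := by
    intro m
    induction m with
    | zero => intro _; rfl
    | succ m ih =>
      intro hm
      have h1 := (step_identities N σ Δx Δt ε hΔx hΔt (w m) (w (m + 1)) (V m) (f m)
        (hstep m (by omega)).1 (hstep m (by omega)).2).1
      rw [h1]
      exact ih (by omega)
  intro m
  induction m with
  | zero => intro _; simp
  | succ m ih =>
    intro hm
    have hmM : m < M := by omega
    have h2 := (step_identities N σ Δx Δt ε hΔx hΔt (w m) (w (m + 1)) (V m) (f m)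
      (hstep m hmM).1 (hstep m hmM).2).2
    -- bound the noise increment
    have hbd : - ((ε * Δx / 2) * ∑ j ∈ range (N + 1), f m j * (‖w (m + 1) j‖ ^ 2 - ‖w m j‖ ^ 2))
        ≤ ε * Δx * (∑ j ∈ range (N + 1), ‖w 0 j‖ ^ 2)
            * ((range (N + 1)).sup' nonempty_range_add_one (fun j => |f m j|)) := by
      have habs : |∑ j ∈ range (N + 1), f m j * (‖w (m + 1) j‖ ^ 2 - ‖w m j‖ ^ 2)|
          ≤ ((range (N + 1)).sup' nonempty_range_add_one (fun j => |f m j|))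
            * (∑ j ∈ range (N + 1), (‖w (m + 1) j‖ ^ 2 + ‖w m j‖ ^ 2)) := by
        calc |∑ j ∈ range (N + 1), f m j * (‖w (m + 1) j‖ ^ 2 - ‖w m j‖ ^ 2)|
            ≤ ∑ j ∈ range (N + 1), |f m j * (‖w (m + 1) j‖ ^ 2 - ‖w m j‖ ^ 2)| :=
              Finset.abs_sum_le_sum_abs _ _
          _ ≤ ∑ j ∈ range (N + 1),
              ((range (N + 1)).sup' nonempty_range_add_one (fun j => |f m j|))
                * (‖w (m + 1) j‖ ^ 2 + ‖w m j‖ ^ 2) := by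
              refine Finset.sum_le_sum fun j hj => ?_
              rw [abs_mul]
              refine mul_le_mul (Finset.le_sup' (fun j => |f m j|) hj) ?_ (abs_nonneg _)
                (le_trans (abs_nonneg _) (Finset.le_sup' (fun j => |f m j|) hj))
              refine le_trans (abs_sub _ _) ?_
              rw [abs_of_nonneg (by positivity), abs_of_nonneg (by positivity)]
          _ = _ := by rw [← Finset.mul_sum]
      have hsum2 : ∑ j ∈ range (N + 1), (‖w (m + 1) j‖ ^ 2 + ‖w m j‖ ^ 2)
          = 2 * ∑ j ∈ range (N + 1), ‖w 0 j‖ ^ 2 := by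
        rw [Finset.sum_add_distrib, hmass (m + 1) (by omega), hmass m (by omega)]
        ring
      rw [hsum2] at habs
      have h3 : - ∑ j ∈ range (N + 1), f m j * (‖w (m + 1) j‖ ^ 2 - ‖w m j‖ ^ 2)
          ≤ ((range (N + 1)).sup' nonempty_range_add_one (fun j => |f m j|))
            * (2 * ∑ j ∈ range (N + 1), ‖w 0 j‖ ^ 2) := le_trans (neg_le_abs _) habs
      have hεΔx : 0 ≤ ε * Δx / 2 := by positivity
      calc - ((ε * Δx / 2) * ∑ j ∈ range (N + 1), f m j * (‖w (m + 1) j‖ ^ 2 - ‖w m j‖ ^ 2))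
          = (ε * Δx / 2) * (- ∑ j ∈ range (N + 1), f m j * (‖w (m + 1) j‖ ^ 2 - ‖w m j‖ ^ 2)) := by
            ring
        _ ≤ (ε * Δx / 2) * (((range (N + 1)).sup' nonempty_range_add_one (fun j => |f m j|))
            * (2 * ∑ j ∈ range (N + 1), ‖w 0 j‖ ^ 2)) := by
            exact mul_le_mul_of_nonneg_left h3 hεΔx
        _ = ε * Δx * (∑ j ∈ range (N + 1), ‖w 0 j‖ ^ 2)
            * ((range (N + 1)).sup' nonempty_range_add_one (fun j => |f m j|)) := by ring
    rw [Finset.sum_range_succ]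
    have := ih (by omega)
    rw [h2]
    linarith

open Real
open scoped NNReal ENNReal

lemma gaussian_mgf (t : ℝ) :
    Integrable (fun x => Real.exp (t * x)) (gaussianReal 0 1) ∧
      ∫ x, Real.exp (t * x) ∂(gaussianReal 0 1) = Real.exp (t ^ 2 / 2) := by
  have hrepr : gaussianReal 0 1
      = volume.withDensity (fun x => ((Real.toNNReal (gaussianPDFReal 0 1 x) : ℝ≥0) : ℝ≥0∞)) := by
    rw [gaussianReal_of_var_ne_zero 0 one_ne_zero]
    rfl
  have hmeasPdf : Measurable fun x => Real.toNNReal (gaussianPDFReal 0 1 x) :=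
    (measurable_gaussianPDFReal 0 1).real_toNNReal
  have hpt : ∀ x : ℝ, (Real.toNNReal (gaussianPDFReal 0 1 x) : ℝ≥0) • Real.exp (t * x)
      = Real.exp (t ^ 2 / 2) * gaussianPDFReal t 1 x := by
    intro x
    rw [NNReal.smul_def, Real.coe_toNNReal _ (gaussianPDFReal_nonneg 0 1 x), smul_eq_mul]
    simp only [gaussianPDFReal, NNReal.coe_one, mul_one, sub_zero]
    rw [mul_assoc, ← Real.exp_add,
      show Real.exp (t ^ 2 / 2) * ((Real.sqrt (2 * π))⁻¹ * Real.exp (-(x - t) ^ 2 / 2))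
        = (Real.sqrt (2 * π))⁻¹ * Real.exp (t ^ 2 / 2 + -(x - t) ^ 2 / 2) by
          rw [Real.exp_add]; ring]
    congr 1
    ring
  have hint : Integrable (fun x => (Real.toNNReal (gaussianPDFReal 0 1 x) : ℝ≥0)
      • Real.exp (t * x)) volume := by
    simp only [hpt]
    exact (integrable_gaussianPDFReal t 1).const_mul _
  constructor
  · rw [hrepr, integrable_withDensity_iff_integrable_smul hmeasPdf]
    exact hint
  · rw [hrepr, integral_withDensity_eq_integral_smul hmeasPdf]
    simp only [hpt]
    rw [integral_const_mul, integral_gaussianPDFReal_eq_one t one_ne_zero, mul_one]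

lemma exp_moment {Ω : Type*} [MeasurableSpace Ω] {P : Measure Ω} {X : Ω → ℝ}
    (hX : Measurable X) (hg : Measure.map X P = gaussianReal 0 1) (t : ℝ) :
    Integrable (fun ω => Real.exp (t * X ω)) P ∧
      ∫ ω, Real.exp (t * X ω) ∂P = Real.exp (t ^ 2 / 2) := by
  have hsm : AEStronglyMeasurable (fun x : ℝ => Real.exp (t * x)) (Measure.map X P) :=
    (Real.continuous_exp.comp (continuous_const.mul continuous_id)).aestronglyMeasurable
  have h1 : Integrable (fun x : ℝ => Real.exp (t * x)) (Measure.map X P) := by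
    rw [hg]; exact (gaussian_mgf t).1
  constructor
  · exact (integrable_map_measure hsm hX.aemeasurable).mp h1
  · rw [← integral_map hX.aemeasurable hsm, hg, (gaussian_mgf t).2]

lemma abs_le_exp_add (x : ℝ) : |x| ≤ Real.exp x + Real.exp (-x) := by
  rcases le_total 0 x with h | h
  · rw [abs_of_nonneg h]
    have := Real.add_one_le_exp x
    have h2 : 0 < Real.exp (-x) := Real.exp_pos _
    linarith
  · rw [abs_of_nonpos h]
    have := Real.add_one_le_exp (-x)
    have h2 : 0 < Real.exp x := Real.exp_pos _
    linarith

lemma exp_mul_abs_le (c x : ℝ) (hc : 0 ≤ c) :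
    Real.exp (c * |x|) ≤ Real.exp (c * x) + Real.exp (-(c * x)) := by
  rcases le_total 0 x with h | h
  · rw [abs_of_nonneg h]
    have h2 : 0 < Real.exp (-(c * x)) := Real.exp_pos _
    linarith
  · rw [abs_of_nonpos h, mul_neg, ← neg_mul]
    have h2 : 0 < Real.exp (c * x) := Real.exp_pos _
    have : Real.exp (-c * x) = Real.exp (-(c * x)) := by rw [neg_mul]
    linarith [this.le, this.ge]

lemma gauss_max_exp {Ω : Type*} [MeasurableSpace Ω] (P : Measure Ω) [IsProbabilityMeasure P]
    (n : ℕ) (X : ℕ → Ω → ℝ) (hm : ∀ j ≤ n, Measurable (X j))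
    (hg : ∀ j ≤ n, Measure.map (X j) P = gaussianReal 0 1) :
    Integrable (fun ω => (range (n + 1)).sup' nonempty_range_add_one (fun j => |X j ω|)) P ∧
    ∫ ω, (range (n + 1)).sup' nonempty_range_add_one (fun j => |X j ω|) ∂P
      ≤ Real.sqrt (2 * Real.log (2 * ((n : ℝ) + 1))) := by
  set K : ℝ := 2 * ((n : ℝ) + 1) with hK
  have hK1 : (1 : ℝ) < K := by
    rw [hK]; have : (0:ℝ) ≤ (n:ℝ) := Nat.cast_nonneg n; linarith
  have hlogK : 0 < Real.log K := Real.log_pos hK1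
  set L : ℝ := Real.sqrt (2 * Real.log K) with hL
  have hLpos : 0 < L := Real.sqrt_pos.mpr (by linarith)
  have hL2 : L ^ 2 = 2 * Real.log K := Real.sq_sqrt (by linarith)
  set Y : Ω → ℝ := fun ω => (range (n + 1)).sup' nonempty_range_add_one (fun j => |X j ω|) with hY
  have hYmeas : Measurable Y := by
    refine Finset.measurable_range_sup'' fun j hj => ?_
    exact (hm j hj).abs
  have hY0 : ∀ ω, 0 ≤ Y ω :=
    fun ω => le_trans (abs_nonneg (X 0 ω))
      (Finset.le_sup' (fun j => |X j ω|) (Finset.mem_range.mpr (by omega)))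
  have hmemj : ∀ j ∈ range (n + 1), j ≤ n := fun j hj => by
    rw [Finset.mem_range] at hj; omega
  -- integrability of exp (L * Y)
  have hintsum : Integrable (fun ω => ∑ j ∈ range (n + 1),
      (Real.exp (L * X j ω) + Real.exp (-(L * X j ω)))) P := by
    refine integrable_finset_sum _ fun j hj => ?_
    have h1 := (exp_moment (hm j (hmemj j hj)) (hg j (hmemj j hj)) L).1
    have h2 := (exp_moment (hm j (hmemj j hj)) (hg j (hmemj j hj)) (-L)).1
    simp only [neg_mul] at h2
    exact h1.add h2
  have hbound : ∀ ω, Real.exp (L * Y ω) ≤ ∑ j ∈ range (n + 1),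
      (Real.exp (L * X j ω) + Real.exp (-(L * X j ω))) := by
    intro ω
    obtain ⟨j0, hj0mem, hj0⟩ := Finset.exists_mem_eq_sup' nonempty_range_add_one
      (fun j => |X j ω|)
    have h1 : Real.exp (L * Y ω) = Real.exp (L * |X j0 ω|) := by
      simp only [hY]; rw [hj0]
    rw [h1]
    refine le_trans (exp_mul_abs_le L (X j0 ω) hLpos.le) ?_
    refine Finset.single_le_sum (f := fun j =>
      Real.exp (L * X j ω) + Real.exp (-(L * X j ω))) (fun j _ => by positivity) hj0mem
  have hexpY : Integrable (fun ω => Real.exp (L * Y ω)) P := by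
    refine Integrable.mono' hintsum ?_ (ae_of_all _ fun ω => ?_)
    · exact ((measurable_const.mul hYmeas).exp).aestronglyMeasurable
    · rw [Real.norm_eq_abs, abs_of_pos (Real.exp_pos _)]
      exact hbound ω
  have habsint : Integrable (fun ω => ∑ j ∈ range (n + 1), |X j ω|) P := by
    refine integrable_finset_sum _ fun j hj => ?_
    have h1 := (exp_moment (hm j (hmemj j hj)) (hg j (hmemj j hj)) 1).1
    have h2 := (exp_moment (hm j (hmemj j hj)) (hg j (hmemj j hj)) (-1)).1
    simp only [one_mul] at h1
    simp only [neg_one_mul] at h2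
    refine Integrable.mono' (h1.add h2) ((hm j (hmemj j hj)).abs).aestronglyMeasurable
      (ae_of_all _ fun ω => ?_)
    rw [Real.norm_eq_abs, abs_abs]
    exact abs_le_exp_add (X j ω)
  have hYint : Integrable Y P := by
    refine Integrable.mono' habsint hYmeas.aestronglyMeasurable (ae_of_all _ fun ω => ?_)
    rw [Real.norm_eq_abs, abs_of_nonneg (hY0 ω)]
    refine Finset.sup'_le _ _ fun j hj => ?_
    exact Finset.single_le_sum (f := fun j => |X j ω|) (fun i _ => abs_nonneg _) hj
  -- Jensen's inequality
  have hjen : Real.exp (∫ ω, L * Y ω ∂P) ≤ ∫ ω, Real.exp (L * Y ω) ∂P := by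
    have := ConvexOn.map_integral_le (μ := P) (f := fun ω => L * Y ω) convexOn_exp
      Real.continuous_exp.continuousOn isClosed_univ
      (ae_of_all _ fun ω => Set.mem_univ _) (hYint.const_mul L) ?_
    · exact this
    · exact hexpY
  have hsumval : ∫ ω, ∑ j ∈ range (n + 1),
      (Real.exp (L * X j ω) + Real.exp (-(L * X j ω))) ∂P = K * Real.exp (L ^ 2 / 2) := by
    rw [integral_finset_sum _ (fun j hj => ?_)]
    · have hval : ∀ j ∈ range (n + 1), ∫ ω,
          (Real.exp (L * X j ω) + Real.exp (-(L * X j ω))) ∂P = 2 * Real.exp (L ^ 2 / 2) := by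
        intro j hj
        have h1 := exp_moment (hm j (hmemj j hj)) (hg j (hmemj j hj)) L
        have h2 := exp_moment (hm j (hmemj j hj)) (hg j (hmemj j hj)) (-L)
        simp only [neg_mul] at h2
        rw [integral_add h1.1 h2.1, h1.2, h2.2]
        rw [show ((-L) ^ 2 : ℝ) = L ^ 2 by ring]
        ring
      rw [Finset.sum_congr rfl hval]
      rw [Finset.sum_const, Finset.card_range, nsmul_eq_mul, hK]
      push_cast
      ring
    · have h1 := (exp_moment (hm j (hmemj j hj)) (hg j (hmemj j hj)) L).1
      have h2 := (exp_moment (hm j (hmemj j hj)) (hg j (hmemj j hj)) (-L)).1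
      simp only [neg_mul] at h2
      exact h1.add h2
  have hEY : Real.exp (L * ∫ ω, Y ω ∂P) ≤ K * Real.exp (L ^ 2 / 2) := by
    rw [show L * ∫ ω, Y ω ∂P = ∫ ω, L * Y ω ∂P from (integral_const_mul L _).symm]
    calc Real.exp (∫ ω, L * Y ω ∂P) ≤ ∫ ω, Real.exp (L * Y ω) ∂P := hjen
      _ ≤ ∫ ω, ∑ j ∈ range (n + 1),
            (Real.exp (L * X j ω) + Real.exp (-(L * X j ω))) ∂P :=
          integral_mono hexpY hintsum hbound
      _ = K * Real.exp (L ^ 2 / 2) := hsumval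
  -- take logs
  have hKpos : (0 : ℝ) < K := by linarith
  have hlog := Real.log_le_log (Real.exp_pos _) hEY
  rw [Real.log_exp, Real.log_mul hKpos.ne' (Real.exp_pos _).ne', Real.log_exp] at hlog
  have hfin : L * ∫ ω, Y ω ∂P ≤ L ^ 2 := by
    rw [hL2]
    linarith [hL2]
  refine ⟨hYint, ?_⟩
  calc ∫ ω, Y ω ∂P ≤ L := by
        have := (mul_le_mul_iff_right₀ hLpos).mp (le_trans hfin (by rw [pow_two]))
        exact this
    _ = _ := rfl


lemma measurable_nE {Ω : Type*} [MeasurableSpace Ω] (N : ℕ) (v : ℕ → Ω → ℂ)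
    (hm : ∀ j ≤ N, Measurable (v j)) (z : ℤ) :
    Measurable fun ω => neumannExt N (fun k => v k ω) z := by
  unfold neumannExt
  split_ifs with h1 h2
  · exact hm 0 (Nat.zero_le N)
  · exact hm N le_rfl
  · exact hm z.toNat (by omega)

lemma measurable_HdisU {Ω : Type*} [MeasurableSpace Ω] (N σ : ℕ) (Δx : ℝ) (v : ℕ → Ω → ℂ)
    (hm : ∀ j ≤ N, Measurable (v j)) :
    Measurable (fun ω => HdisU N Δx σ (fun j => v j ω)) := by
  unfold HdisU
  apply Measurable.sub
  · apply Measurable.const_mul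
    apply Finset.measurable_sum
    intro j hj
    apply Measurable.div_const
    apply Measurable.pow_const
    apply Measurable.norm
    exact (measurable_nE N v hm ((j : ℤ) + 1)).sub
      (hm j (by rw [Finset.mem_range] at hj; omega))
  · apply Measurable.const_mul
    apply Finset.measurable_sum
    intro j hj
    exact ((hm j (by rw [Finset.mem_range] at hj; omega)).norm).pow_const _

end MECaux

open MECaux

/-- Bound on the expected running maximum of the discrete energy for the MEC scheme with
multiplicative noise:
`E(max_{0≤m≤M} H_dis[u^m]) ≤ H_dis[u^0] + (√3/2)·ε·M_dis[u^0]·√(2 ln(2(N+1)))·t_M/((Δt)^{3/2}·√Δx)`. -/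
theorem mec_multiplicative_expected_max_energy_bound
    {Ω : Type*} [MeasurableSpace Ω] (P : Measure Ω) [IsProbabilityMeasure P]
    (N M : ℕ) (hN : 1 ≤ N) (hM : 1 ≤ M)
    (Δx Δt : ℝ) (hΔx : 0 < Δx) (hΔx1 : Δx < 1) (hΔt : 0 < Δt)
    (ε : ℝ) (hε : 0 ≤ ε) (σ : ℕ) (hσ : 1 ≤ σ)
    (u : ℕ → ℕ → Ω → ℂ) (u0 : ℕ → ℂ) (hu0 : ∀ j ω, u 0 j ω = u0 j)
    (humeas : ∀ m ≤ M, ∀ j ≤ N, Measurable (u m j))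
    (χ : ℕ → ℕ → Ω → ℝ)
    (hχmeas : ∀ m < M, ∀ j ≤ N, Measurable (χ m j))
    -- the whole family of noises is made of independent random variables
    (hχindep : iIndepFun
      (fun p : Fin M × Fin (N + 1) => χ (p.1 : ℕ) (p.2 : ℕ)) P)
    -- each of which is a standard Gaussian
    (hχgauss : ∀ m < M, ∀ j ≤ N, Measure.map (χ m j) P = gaussianReal 0 1)
    -- for each m, the noises at step m are independent of (u^0, …, u^m)
    (hχpast : ∀ m < M,
      Indep (⨆ j ∈ Finset.range (N + 1), MeasurableSpace.comap (χ m j) inferInstance)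
        (⨆ k ∈ Finset.range (m + 1), ⨆ j ∈ Finset.range (N + 1),
          MeasurableSpace.comap (u k j) inferInstance) P)
    (V : ℕ → ℕ → Ω → ℝ)
    -- MEC scheme hypotheses, almost surely
    (hscheme : ∀ᵐ ω ∂P, ∀ m < M, ∀ j ≤ N,
      (V m j ω * (‖u (m + 1) j ω‖ ^ 2 - ‖u m j ω‖ ^ 2)
          = (1 / ((σ : ℝ) + 1))
            * (‖u (m + 1) j ω‖ ^ (2 * (σ + 1)) - ‖u m j ω‖ ^ (2 * (σ + 1)))) ∧
      (Complex.I * (u (m + 1) j ω - u m j ω) / (Δt : ℂ)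
          + (neumannExt N (fun k => (u m k ω + u (m + 1) k ω) / 2) ((j : ℤ) - 1)
              - 2 * neumannExt N (fun k => (u m k ω + u (m + 1) k ω) / 2) (j : ℤ)
              + neumannExt N (fun k => (u m k ω + u (m + 1) k ω) / 2) ((j : ℤ) + 1))
            / (Δx : ℂ) ^ 2
          + (V m j ω : ℂ) * ((u m j ω + u (m + 1) j ω) / 2)
        = (ε : ℂ) * ((Real.sqrt 3 / 2 * χ m j ω / Real.sqrt (Δt * Δx) : ℝ) : ℂ)
            * ((u m j ω + u (m + 1) j ω) / 2))) :
    (∫ ω, (Finset.range (M + 1)).sup' Finset.nonempty_range_add_one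
        (fun m => HdisU N Δx σ (fun j => u m j ω)) ∂P)
      ≤ HdisU N Δx σ u0
        + (Real.sqrt 3 / 2) * ε * MdisU N Δx u0
          * Real.sqrt (2 * Real.log (2 * ((N : ℝ) + 1)))
          * ((M : ℝ) * Δt) / (Δt ^ ((3 : ℝ) / 2) * Real.sqrt Δx) := by
  classical
  set H0 : ℝ := HdisU N Δx σ u0 with hH0
  set S0 : ℝ := ∑ j ∈ range (N + 1), ‖u0 j‖ ^ 2 with hS0
  have hS0nonneg : 0 ≤ S0 := Finset.sum_nonneg fun j _ => by positivity
  set q : ℝ := Real.sqrt 3 / 2 / Real.sqrt (Δt * Δx) with hq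
  have hqpos : 0 < q := by
    rw [hq]
    have h3 : (0:ℝ) < Real.sqrt 3 := Real.sqrt_pos.mpr (by norm_num)
    have htx : (0:ℝ) < Real.sqrt (Δt * Δx) := Real.sqrt_pos.mpr (by positivity)
    positivity
  set cc : ℝ := ε * Δx * S0 * q with hcc
  have hccnonneg : 0 ≤ cc := by rw [hcc]; positivity
  set B : ℝ := Real.sqrt (2 * Real.log (2 * ((N : ℝ) + 1))) with hB
  -- the per-noise-step maxima
  set g : ℕ → Ω → ℝ :=
    fun k ω => (range (N + 1)).sup' nonempty_range_add_one (fun j => |χ k j ω|) with hg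
  set G : Ω → ℝ := fun ω => ∑ k ∈ range M, g k ω with hG
  have hgmax : ∀ k < M, Integrable (g k) P ∧ ∫ ω, g k ω ∂P ≤ B := by
    intro k hk
    exact gauss_max_exp P N (fun j => χ k j) (fun j hj => hχmeas k hk j hj)
      (fun j hj => hχgauss k hk j hj)
  have hgnonneg : ∀ k ω, 0 ≤ g k ω := fun k ω =>
    le_trans (abs_nonneg (χ k 0 ω))
      (Finset.le_sup' (fun j => |χ k j ω|) (Finset.mem_range.mpr (by omega)))
  have hGnonneg : ∀ ω, 0 ≤ G ω := fun ω => Finset.sum_nonneg fun k _ => hgnonneg k ω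
  have hGint : Integrable G P := by
    rw [hG]
    exact integrable_finset_sum _ fun k hk => (hgmax k (Finset.mem_range.mp hk)).1
  -- measurability of the discrete energies
  have hFmeas : ∀ m ≤ M, Measurable (fun ω => HdisU N Δx σ (fun j => u m j ω)) :=
    fun m hm => measurable_HdisU N σ Δx (fun j => u m j) (fun j hj => humeas m hm j hj)
  have hsupmeas : Measurable (fun ω => (Finset.range (M + 1)).sup' Finset.nonempty_range_add_one
      (fun m => HdisU N Δx σ (fun j => u m j ω))) :=
    Finset.measurable_range_sup'' hFmeas
  -- pathwise bound
  have hae : ∀ᵐ ω ∂P, (Finset.range (M + 1)).sup' Finset.nonempty_range_add_one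
      (fun m => HdisU N Δx σ (fun j => u m j ω)) ≤ H0 + cc * G ω := by
    filter_upwards [hscheme] with ω hω
    have hu0' : ∀ j, u 0 j ω = u0 j := fun j => hu0 j ω
    have hpath := pathwise N M σ Δx Δt ε hΔx hΔt hε (fun m j => u m j ω)
      (fun m j => V m j ω)
      (fun m j => Real.sqrt 3 / 2 * χ m j ω / Real.sqrt (Δt * Δx))
      (fun m hm => ⟨fun j hj => (hω m hm j hj).1, fun j hj => (hω m hm j hj).2⟩)
    refine Finset.sup'_le _ _ fun m hm => ?_
    rw [Finset.mem_range] at hm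
    have h1 := hpath m (by omega)
    simp only [hu0'] at h1
    refine le_trans h1 ?_
    refine add_le_add_right ?_ H0
    have hterm : ∀ k ∈ range m,
        ε * Δx * S0 * ((range (N + 1)).sup' nonempty_range_add_one
            (fun j => |Real.sqrt 3 / 2 * χ k j ω / Real.sqrt (Δt * Δx)|))
          ≤ cc * g k ω := by
      intro k hk
      have hsup : (range (N + 1)).sup' nonempty_range_add_one
          (fun j => |Real.sqrt 3 / 2 * χ k j ω / Real.sqrt (Δt * Δx)|) ≤ q * g k ω := by
        refine Finset.sup'_le _ _ fun j hj => ?_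
        have : |Real.sqrt 3 / 2 * χ k j ω / Real.sqrt (Δt * Δx)| = q * |χ k j ω| := by
          rw [abs_div, abs_mul, abs_of_nonneg (Real.sqrt_nonneg (Δt * Δx)),
            abs_of_nonneg (by positivity : (0:ℝ) ≤ Real.sqrt 3 / 2), hq]
          ring
        rw [this]
        exact mul_le_mul_of_nonneg_left
          (Finset.le_sup' (fun j => |χ k j ω|) hj) hqpos.le
      calc ε * Δx * S0 * ((range (N + 1)).sup' nonempty_range_add_one
            (fun j => |Real.sqrt 3 / 2 * χ k j ω / Real.sqrt (Δt * Δx)|))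
          ≤ ε * Δx * S0 * (q * g k ω) := by
            refine mul_le_mul_of_nonneg_left hsup (by positivity)
        _ = cc * g k ω := by rw [hcc]; ring
    calc ∑ k ∈ range m, ε * Δx * S0 * ((range (N + 1)).sup' nonempty_range_add_one
          (fun j => |Real.sqrt 3 / 2 * χ k j ω / Real.sqrt (Δt * Δx)|))
        ≤ ∑ k ∈ range m, cc * g k ω := Finset.sum_le_sum hterm
      _ ≤ ∑ k ∈ range M, cc * g k ω := by
          refine Finset.sum_le_sum_of_subset_of_nonneg
            (Finset.range_subset_range.mpr (by omega)) fun k _ _ => ?_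
          exact mul_nonneg hccnonneg (hgnonneg k ω)
      _ = cc * G ω := by rw [hG, Finset.mul_sum]
  -- lower bound for the sup (to get integrability)
  have hlow : ∀ ω, H0 ≤ (Finset.range (M + 1)).sup' Finset.nonempty_range_add_one
      (fun m => HdisU N Δx σ (fun j => u m j ω)) := by
    intro ω
    have hu0' : ∀ j, u 0 j ω = u0 j := fun j => hu0 j ω
    have := Finset.le_sup' (fun m => HdisU N Δx σ (fun j => u m j ω))
      (Finset.mem_range.mpr (show 0 < M + 1 by omega))
    simp only [hu0'] at this
    exact this
  -- integrability of the sup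
  have hBint : Integrable (fun ω => H0 + cc * G ω) P :=
    (integrable_const H0).add (hGint.const_mul cc)
  have hsupint : Integrable (fun ω => (Finset.range (M + 1)).sup' Finset.nonempty_range_add_one
      (fun m => HdisU N Δx σ (fun j => u m j ω))) P := by
    refine Integrable.mono' ((integrable_const |H0|).add (hGint.const_mul cc))
      hsupmeas.aestronglyMeasurable ?_
    filter_upwards [hae] with ω hω
    rw [Real.norm_eq_abs, Pi.add_apply]
    refine abs_le.mpr ⟨?_, ?_⟩
    · refine le_trans ?_ (hlow ω)
      have := neg_abs_le H0
      have h2 := mul_nonneg hccnonneg (hGnonneg ω)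
      linarith
    · refine le_trans hω ?_
      have := le_abs_self H0
      linarith
  -- conclude
  have hint1 : (∫ ω, (Finset.range (M + 1)).sup' Finset.nonempty_range_add_one
      (fun m => HdisU N Δx σ (fun j => u m j ω)) ∂P) ≤ ∫ ω, (H0 + cc * G ω) ∂P :=
    integral_mono_ae hsupint hBint hae
  have hint2 : (∫ ω, (H0 + cc * G ω) ∂P) = H0 + cc * ∫ ω, G ω ∂P := by
    rw [integral_add (integrable_const H0) (hGint.const_mul cc), integral_const,
      integral_const_mul]
    simp
  have hint3 : (∫ ω, G ω ∂P) ≤ (M : ℝ) * B := by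
    rw [hG, integral_finset_sum _ (fun k hk => (hgmax k (Finset.mem_range.mp hk)).1)]
    calc ∑ k ∈ range M, ∫ ω, g k ω ∂P ≤ ∑ k ∈ range M, B :=
          Finset.sum_le_sum fun k hk => (hgmax k (Finset.mem_range.mp hk)).2
      _ = (M : ℝ) * B := by rw [Finset.sum_const, Finset.card_range, nsmul_eq_mul]
  have hfinal : H0 + cc * ((M : ℝ) * B) = H0
      + (Real.sqrt 3 / 2) * ε * MdisU N Δx u0 * B * ((M : ℝ) * Δt)
        / (Δt ^ ((3 : ℝ) / 2) * Real.sqrt Δx) := by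
    have h32 : Δt ^ ((3 : ℝ) / 2) = Δt * Real.sqrt Δt := by
      rw [show (3 : ℝ) / 2 = 1 + 1 / 2 by norm_num, Real.rpow_add hΔt, Real.rpow_one,
        ← Real.sqrt_eq_rpow]
    have hsm : Real.sqrt (Δt * Δx) = Real.sqrt Δt * Real.sqrt Δx :=
      Real.sqrt_mul hΔt.le Δx
    have hst : (0:ℝ) < Real.sqrt Δt := Real.sqrt_pos.mpr hΔt
    have hsx : (0:ℝ) < Real.sqrt Δx := Real.sqrt_pos.mpr hΔx
    have hst2 : Real.sqrt Δt * Real.sqrt Δt = Δt := Real.mul_self_sqrt hΔt.le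
    rw [hcc, hq, hsm, MdisU, h32, hS0]
    field_simp
  calc (∫ ω, (Finset.range (M + 1)).sup' Finset.nonempty_range_add_one
      (fun m => HdisU N Δx σ (fun j => u m j ω)) ∂P)
      ≤ H0 + cc * ∫ ω, G ω ∂P := le_of_le_of_eq hint1 hint2
    _ ≤ H0 + cc * ((M : ℝ) * B) := by
        refine add_le_add_right (mul_le_mul_of_nonneg_left hint3 hccnonneg) H0
    _ = _ := hfinal
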